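/- Let b₁, b₂ ∈ ℝ with b₁·b₂ ≠ 4, let k be a nonzero integer, and set λ = 2k·i. Then for every pair of twice differentiable functions φ₁⁰, φ₂⁰ : ℝ → ℂ, not both identically zero on [−π/2, π/2], satisfying (φⱼ⁰)''(ω) = λ²·φⱼ⁰(ω) on [−π/2, π/2] and φ₁⁰(−π/2) = 0, φ₁⁰(π/2) + b₁·φ₂⁰(0) = 0, φ₂⁰(−π/2) = 0, φ₂⁰(π/2) + b₂·φ₁⁰(0) = 0, there exists NO pair of twice differentiable φ₁, φ₂ : ℝ → ℂ with φⱼ''(ω) − λ²·φⱼ(ω) = 2λ·φⱼ⁰(ω) for all ω ∈ [−π/2, π/2] (j = 1, 2) and φ₁(−π/2) = 0, φ₁(π/2) + b₁·φ₂(0) = 0, φ₂(−π/2) = 0, φ₂(π/2) + b₂·φ₁(0) = 0. (That is, the eigenvalue λ = 2ki of NS(b₁, b₂) has no associated vectors.) -/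

import Mathlib

open Real Set

private lemma hasDerivAt_csin (a b : ℂ) (x : ℝ) :
    HasDerivAt (fun ω : ℝ => Complex.sin (a * ω + b)) (a * Complex.cos (a * x + b)) x := by
  have h1 : HasDerivAt (fun z : ℂ => a * z + b) a (x : ℂ) := by
    simpa using ((hasDerivAt_id (x : ℂ)).const_mul a).add_const b
  have h2 := (Complex.hasDerivAt_sin (a * x + b)).comp (x : ℂ) h1
  have h3 := h2.comp_ofReal
  simpa [Function.comp, mul_comm] using h3

private lemma hasDerivAt_ccos (a b : ℂ) (x : ℝ) :
    HasDerivAt (fun ω : ℝ => Complex.cos (a * ω + b)) (-(a * Complex.sin (a * x + b))) x := by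
  have h1 : HasDerivAt (fun z : ℂ => a * z + b) a (x : ℂ) := by
    simpa using ((hasDerivAt_id (x : ℂ)).const_mul a).add_const b
  have h2 := (Complex.hasDerivAt_cos (a * x + b)).comp (x : ℂ) h1
  have h3 := h2.comp_ofReal
  have : HasDerivAt (fun ω : ℝ => Complex.cos (a * ω + b)) (-Complex.sin (a * x + b) * a) x := by
    simpa [Function.comp] using h3
  convert this using 1; ring

private lemma hasDerivAt_coe (x : ℝ) : HasDerivAt (fun ω : ℝ => (ω : ℂ)) 1 x := by
  simpa using (hasDerivAt_id x).ofReal_comp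

private lemma constOn {F : ℝ → ℂ}
    (h : ∀ x ∈ Icc (-(π/2)) (π/2), HasDerivAt F 0 x) :
    ∀ x ∈ Icc (-(π/2)) (π/2), F x = F (-(π/2)) := by
  apply constant_of_has_deriv_right_zero
  · intro x hx; exact (h x hx).continuousAt.continuousWithinAt
  · intro x hx
    exact (h x ⟨hx.1, hx.2.le⟩).hasDerivWithinAt

private lemma step1 (k : ℤ) (f : ℝ → ℂ)
    (hd1 : Differentiable ℝ f) (hd2 : Differentiable ℝ (deriv f))
    (hode : ∀ ω ∈ Icc (-(π/2)) (π/2),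
      deriv (deriv f) ω = ((2*(k:ℂ))*Complex.I)^2 * f ω)
    (hbc : f (-(π/2)) = 0) :
    ∀ ω ∈ Icc (-(π/2)) (π/2),
      (2*(k:ℂ)) * f ω
        = deriv f (-(π/2)) * Complex.sin (2*(k:ℂ)*ω + (k:ℂ)*(π:ℂ)) := by
  set K : ℂ := 2*(k:ℂ) with hKdef
  set B : ℂ := (k:ℂ)*(π:ℂ) with hBdef
  have hL2 : ∀ ω ∈ Icc (-(π/2)) (π/2), deriv (deriv f) ω = -(K^2) * f ω := by
    intro ω hω
    rw [hode ω hω, mul_pow, Complex.I_sq]; ring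
  have harg : K * ((-(π/2) : ℝ) : ℂ) + B = 0 := by
    rw [hKdef, hBdef]; push_cast; ring
  -- F₀ : Wronskian with sin
  have h0 : ∀ x ∈ Icc (-(π/2)) (π/2),
      HasDerivAt (fun ω : ℝ =>
        f ω * (K * Complex.cos (K*ω + B)) - deriv f ω * Complex.sin (K*ω + B)) 0 x := by
    intro x hx
    have h1 : HasDerivAt (fun ω : ℝ => f ω * (K * Complex.cos (K*ω + B)))
        (deriv f x * (K * Complex.cos (K*x + B)) + f x * (K * (-(K * Complex.sin (K*x + B))))) x :=
      ((hd1 x).hasDerivAt).mul ((hasDerivAt_ccos K B x).const_mul K)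
    have h2 : HasDerivAt (fun ω : ℝ => deriv f ω * Complex.sin (K*ω + B))
        (deriv (deriv f) x * Complex.sin (K*x + B) + deriv f x * (K * Complex.cos (K*x + B))) x :=
      ((hd2 x).hasDerivAt).mul (hasDerivAt_csin K B x)
    have h3 := h1.sub h2
    refine h3.congr_deriv (Eq.symm ?_)
    rw [hL2 x hx]; ring
  have hF0 := constOn h0
  have hF0L : (f (-(π/2)) * (K * Complex.cos (K*((-(π/2):ℝ):ℂ) + B))
      - deriv f (-(π/2)) * Complex.sin (K*((-(π/2):ℝ):ℂ) + B)) = 0 := by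
    rw [harg, hbc]; simp
  -- F₁ : Wronskian with cos
  have h1' : ∀ x ∈ Icc (-(π/2)) (π/2),
      HasDerivAt (fun ω : ℝ =>
        f ω * (-(K * Complex.sin (K*ω + B))) - deriv f ω * Complex.cos (K*ω + B)) 0 x := by
    intro x hx
    have ha : HasDerivAt (fun ω : ℝ => f ω * (-(K * Complex.sin (K*ω + B))))
        (deriv f x * (-(K * Complex.sin (K*x + B))) + f x * (-(K * (K * Complex.cos (K*x + B))))) x :=
      ((hd1 x).hasDerivAt).mul (((hasDerivAt_csin K B x).const_mul K).neg)
    have hb : HasDerivAt (fun ω : ℝ => deriv f ω * Complex.cos (K*ω + B))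
        (deriv (deriv f) x * Complex.cos (K*x + B) + deriv f x * (-(K * Complex.sin (K*x + B)))) x :=
      ((hd2 x).hasDerivAt).mul (hasDerivAt_ccos K B x)
    have h3 := ha.sub hb
    refine h3.congr_deriv (Eq.symm ?_)
    rw [hL2 x hx]; ring
  have hF1 := constOn h1'
  have hF1L : (f (-(π/2)) * (-(K * Complex.sin (K*((-(π/2):ℝ):ℂ) + B)))
      - deriv f (-(π/2)) * Complex.cos (K*((-(π/2):ℝ):ℂ) + B)) = -(deriv f (-(π/2))) := by
    rw [harg, hbc]; simp
  intro ω hω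
  have e0 := hF0 ω hω
  rw [hF0L] at e0
  have e1 := hF1 ω hω
  rw [hF1L] at e1
  have hpy := Complex.sin_sq_add_cos_sq (K*(ω:ℂ) + B)
  linear_combination Complex.cos (K*(ω:ℂ) + B) * e0 - Complex.sin (K*(ω:ℂ) + B) * e1
    - K * f ω * hpy

private lemma step2 (k : ℤ) (hk : k ≠ 0) (c : ℂ) (f : ℝ → ℂ)
    (hd1 : Differentiable ℝ f) (hd2 : Differentiable ℝ (deriv f))
    (hode : ∀ ω ∈ Icc (-(π/2)) (π/2),
      deriv (deriv f) ω = ((2*(k:ℂ))*Complex.I)^2 * f ω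
        + 2*((2*(k:ℂ))*Complex.I) * (c * Complex.sin (2*(k:ℂ)*ω + (k:ℂ)*(π:ℂ))))
    (hbc : f (-(π/2)) = 0) :
    (2*(k:ℂ)) * f (π/2) = -(((2*(k:ℂ))*Complex.I) * c * (π:ℂ)) ∧
    (2*(k:ℂ)) * Complex.cos ((k:ℂ)*(π:ℂ)) * f 0 = -(((2*(k:ℂ))*Complex.I) * c * (π:ℂ) / 2) := by
  set K : ℂ := 2*(k:ℂ) with hKdef
  set B : ℂ := (k:ℂ)*(π:ℂ) with hBdef
  set L : ℂ := K * Complex.I with hLdef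
  have hkC : (k:ℂ) ≠ 0 := Int.cast_ne_zero.2 hk
  have hKne : K ≠ 0 := by rw [hKdef]; exact mul_ne_zero two_ne_zero hkC
  have hL2 : L^2 = -(K^2) := by rw [hLdef, mul_pow, Complex.I_sq]; ring
  set G : ℝ → ℂ := fun ω =>
    f ω * (K * Complex.cos (K*ω + B)) - deriv f ω * Complex.sin (K*ω + B)
      + 2*L*c * ((ω:ℂ)/2 - Complex.sin (2*K*(ω:ℂ) + 2*B)/(4*K)) with hGdef
  have hG0 : ∀ x ∈ Icc (-(π/2)) (π/2), HasDerivAt G 0 x := by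
    intro x hx
    have h1 : HasDerivAt (fun ω : ℝ => f ω * (K * Complex.cos (K*ω + B)))
        (deriv f x * (K * Complex.cos (K*x + B)) + f x * (K * (-(K * Complex.sin (K*x + B))))) x :=
      ((hd1 x).hasDerivAt).mul ((hasDerivAt_ccos K B x).const_mul K)
    have h2 : HasDerivAt (fun ω : ℝ => deriv f ω * Complex.sin (K*ω + B))
        (deriv (deriv f) x * Complex.sin (K*x + B) + deriv f x * (K * Complex.cos (K*x + B))) x :=
      ((hd2 x).hasDerivAt).mul (hasDerivAt_csin K B x)
    have h3 : HasDerivAt (fun ω : ℝ => 2*L*c * ((ω:ℂ)/2 - Complex.sin (2*K*(ω:ℂ) + 2*B)/(4*K)))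
        (2*L*c * ((1:ℂ)/2 - (2*K) * Complex.cos (2*K*(x:ℂ) + 2*B)/(4*K))) x := by
      have ha := (hasDerivAt_coe x).div_const 2
      have hbb := (hasDerivAt_csin (2*K) (2*B) x).div_const (4*K)
      exact (ha.sub hbb).const_mul (2*L*c)
    have h4 := (h1.sub h2).add h3
    refine h4.congr_deriv (Eq.symm ?_)
    have hdouble : Complex.cos (2*K*(x:ℂ) + 2*B) = 1 - 2 * (Complex.sin (K*(x:ℂ) + B))^2 := by
      rw [show (2*K*(x:ℂ) + 2*B) = 2*(K*(x:ℂ) + B) by ring, Complex.cos_two_mul]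
      linear_combination 2 * Complex.sin_sq_add_cos_sq (K*(x:ℂ) + B)
    have hdiv : (2*K) * Complex.cos (2*K*(x:ℂ) + 2*B) / (4*K)
        = Complex.cos (2*K*(x:ℂ) + 2*B) / 2 := by
      field_simp; ring
    rw [hode x hx, hL2, hdiv]
    linear_combination (L*c) * hdouble
  have hG := constOn hG0
  have hargL : K * ((-(π/2) : ℝ) : ℂ) + B = 0 := by rw [hKdef, hBdef]; push_cast; ring
  have harg2L : 2*K * ((-(π/2) : ℝ) : ℂ) + 2*B = 0 := by rw [hKdef, hBdef]; push_cast; ring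
  have hGL : G (-(π/2)) = -(L*c*(π:ℂ)/2) := by
    rw [hGdef]
    simp only [hargL, harg2L, hbc, Complex.sin_zero, Complex.cos_zero]
    push_cast
    ring
  have hsinB : Complex.sin B = 0 := by
    rw [hBdef]; exact_mod_cast Complex.sin_int_mul_pi k
  have hsin2B : Complex.sin (2*B) = 0 := by
    rw [hBdef, show 2*((k:ℂ)*(π:ℂ)) = ((2*k : ℤ):ℂ)*(π:ℂ) by push_cast; ring]
    exact_mod_cast Complex.sin_int_mul_pi (2*k)
  constructor
  · -- at π/2
    have hmem : (π/2 : ℝ) ∈ Icc (-(π/2)) (π/2) := ⟨by linarith [pi_pos], le_refl _⟩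
    have h := hG _ hmem
    rw [hGL, hGdef] at h
    simp only at h
    have e1 : K * (((π/2):ℝ):ℂ) + B = 2*B := by rw [hKdef, hBdef]; push_cast; ring
    have e2 : 2*K * (((π/2):ℝ):ℂ) + 2*B = ((4*k : ℤ):ℂ)*(π:ℂ) := by
      rw [hKdef, hBdef]; push_cast; ring
    have hcos2B : Complex.cos (2*B) = 1 := by
      rw [hBdef, show 2*((k:ℂ)*(π:ℂ)) = ((k : ℤ):ℂ)*(2*(π:ℂ)) by push_cast; ring]
      exact_mod_cast Complex.cos_int_mul_two_pi k
    rw [e1, e2, hsin2B, hcos2B, Complex.sin_int_mul_pi] at h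
    have hπ : ((((π/2):ℝ)):ℂ) = (π:ℂ)/2 := by push_cast; ring
    rw [hπ] at h
    linear_combination h
  · -- at 0
    have hmem : (0 : ℝ) ∈ Icc (-(π/2)) (π/2) := ⟨by linarith [pi_pos], by linarith [pi_pos]⟩
    have h := hG _ hmem
    rw [hGL, hGdef] at h
    simp only [Complex.ofReal_zero, mul_zero, zero_add, zero_div, zero_sub] at h
    rw [hsinB, hsin2B] at h
    linear_combination h

theorem system_no_associated_vector_even (b₁ b₂ : ℝ) (hb : b₁ * b₂ ≠ 4)
    (k : ℤ) (hk : k ≠ 0) :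
    ∀ φ₁₀ φ₂₀ : ℝ → ℂ,
      Differentiable ℝ φ₁₀ → Differentiable ℝ (deriv φ₁₀) →
      Differentiable ℝ φ₂₀ → Differentiable ℝ (deriv φ₂₀) →
      ((∃ ω ∈ Icc (-(π / 2)) (π / 2), φ₁₀ ω ≠ 0) ∨
        (∃ ω ∈ Icc (-(π / 2)) (π / 2), φ₂₀ ω ≠ 0)) →
      (∀ ω ∈ Icc (-(π / 2)) (π / 2),
        deriv (deriv φ₁₀) ω = ((2 * (k : ℂ)) * Complex.I) ^ 2 * φ₁₀ ω) →
      (∀ ω ∈ Icc (-(π / 2)) (π / 2),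
        deriv (deriv φ₂₀) ω = ((2 * (k : ℂ)) * Complex.I) ^ 2 * φ₂₀ ω) →
      φ₁₀ (-(π / 2)) = 0 → φ₁₀ (π / 2) + (b₁ : ℂ) * φ₂₀ 0 = 0 →
      φ₂₀ (-(π / 2)) = 0 → φ₂₀ (π / 2) + (b₂ : ℂ) * φ₁₀ 0 = 0 →
      ¬ ∃ φ₁ φ₂ : ℝ → ℂ,
          Differentiable ℝ φ₁ ∧ Differentiable ℝ (deriv φ₁) ∧
          Differentiable ℝ φ₂ ∧ Differentiable ℝ (deriv φ₂) ∧
          (∀ ω ∈ Icc (-(π / 2)) (π / 2),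
            deriv (deriv φ₁) ω - ((2 * (k : ℂ)) * Complex.I) ^ 2 * φ₁ ω
              = 2 * ((2 * (k : ℂ)) * Complex.I) * φ₁₀ ω) ∧
          (∀ ω ∈ Icc (-(π / 2)) (π / 2),
            deriv (deriv φ₂) ω - ((2 * (k : ℂ)) * Complex.I) ^ 2 * φ₂ ω
              = 2 * ((2 * (k : ℂ)) * Complex.I) * φ₂₀ ω) ∧
          φ₁ (-(π / 2)) = 0 ∧ φ₁ (π / 2) + (b₁ : ℂ) * φ₂ 0 = 0 ∧
          φ₂ (-(π / 2)) = 0 ∧ φ₂ (π / 2) + (b₂ : ℂ) * φ₁ 0 = 0 := by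
  intro φ₁₀ φ₂₀ hd11 hd12 hd21 hd22 hnz hode1 hode2 hbc11 hbc12 hbc21 hbc22
  rintro ⟨φ₁, φ₂, hD11, hD12, hD21, hD22, hO1, hO2, hB11, hB12, hB21, hB22⟩
  have hkC : (k:ℂ) ≠ 0 := Int.cast_ne_zero.2 hk
  have hKne : (2*(k:ℂ)) ≠ 0 := mul_ne_zero two_ne_zero hkC
  have hπC : ((π:ℝ):ℂ) ≠ 0 := by
    exact_mod_cast Complex.ofReal_ne_zero.mpr pi_ne_zero
  have hs1 := step1 k φ₁₀ hd11 hd12 hode1 hbc11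
  have hs2 := step1 k φ₂₀ hd21 hd22 hode2 hbc21
  set c₁ : ℂ := deriv φ₁₀ (-(π/2)) / (2*(k:ℂ)) with hc1def
  set c₂ : ℂ := deriv φ₂₀ (-(π/2)) / (2*(k:ℂ)) with hc2def
  have hφ₁₀ : ∀ ω ∈ Icc (-(π/2)) (π/2),
      φ₁₀ ω = c₁ * Complex.sin (2*(k:ℂ)*ω + (k:ℂ)*(π:ℂ)) := by
    intro ω hω
    have h := hs1 ω hω
    rw [eq_comm, hc1def, div_mul_eq_mul_div, div_eq_iff hKne]
    linear_combination -h
  have hφ₂₀ : ∀ ω ∈ Icc (-(π/2)) (π/2),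
      φ₂₀ ω = c₂ * Complex.sin (2*(k:ℂ)*ω + (k:ℂ)*(π:ℂ)) := by
    intro ω hω
    have h := hs2 ω hω
    rw [eq_comm, hc2def, div_mul_eq_mul_div, div_eq_iff hKne]
    linear_combination -h
  have hO1' : ∀ ω ∈ Icc (-(π/2)) (π/2),
      deriv (deriv φ₁) ω = ((2*(k:ℂ))*Complex.I)^2 * φ₁ ω
        + 2*((2*(k:ℂ))*Complex.I) * (c₁ * Complex.sin (2*(k:ℂ)*ω + (k:ℂ)*(π:ℂ))) := by
    intro ω hω
    have h := hO1 ω hω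
    rw [← hφ₁₀ ω hω]
    linear_combination h
  have hO2' : ∀ ω ∈ Icc (-(π/2)) (π/2),
      deriv (deriv φ₂) ω = ((2*(k:ℂ))*Complex.I)^2 * φ₂ ω
        + 2*((2*(k:ℂ))*Complex.I) * (c₂ * Complex.sin (2*(k:ℂ)*ω + (k:ℂ)*(π:ℂ))) := by
    intro ω hω
    have h := hO2 ω hω
    rw [← hφ₂₀ ω hω]
    linear_combination h
  obtain ⟨hA1, hA2⟩ := step2 k hk c₁ φ₁ hD11 hD12 hO1' hB11
  obtain ⟨hB1, hB2⟩ := step2 k hk c₂ φ₂ hD21 hD22 hO2' hB21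
  set γ : ℂ := Complex.cos ((k:ℂ)*(π:ℂ)) with hγdef
  have hγ2 : γ^2 = 1 := by
    have h := Complex.sin_sq_add_cos_sq ((k:ℂ)*(π:ℂ))
    have hs : Complex.sin ((k:ℂ)*(π:ℂ)) = 0 := by exact_mod_cast Complex.sin_int_mul_pi k
    rw [hs] at h
    simpa [hγdef] using h
  have hγne : γ ≠ 0 := by
    intro h
    rw [h] at hγ2
    simp at hγ2
  set L : ℂ := (2*(k:ℂ))*Complex.I with hLdef
  have hLne : L ≠ 0 := mul_ne_zero hKne Complex.I_ne_zero
  have hLπne : L * ((π:ℝ):ℂ) ≠ 0 := mul_ne_zero hLne hπC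
  -- first combined equation
  have h1 : L * ((π:ℝ):ℂ) * (γ * c₁ * 2 + (b₁:ℂ) * c₂) = 0 := by
    linear_combination 2*γ*hA1 + 2*(b₁:ℂ)*hB2 - 2*(2*(k:ℂ))*γ*hB12
  have h2 : L * ((π:ℝ):ℂ) * (γ * c₂ * 2 + (b₂:ℂ) * c₁) = 0 := by
    linear_combination 2*γ*hB1 + 2*(b₂:ℂ)*hA2 - 2*(2*(k:ℂ))*γ*hB22
  have e1 : γ * c₁ * 2 + (b₁:ℂ) * c₂ = 0 := by
    rcases mul_eq_zero.mp h1 with h | h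
    · exact absurd h hLπne
    · exact h
  have e2 : γ * c₂ * 2 + (b₂:ℂ) * c₁ = 0 := by
    rcases mul_eq_zero.mp h2 with h | h
    · exact absurd h hLπne
    · exact h
  have h4 : ((4:ℂ) - (b₁:ℂ)*(b₂:ℂ)) ≠ 0 := by
    intro h
    apply hb
    have : ((b₁*b₂ : ℝ):ℂ) = ((4:ℝ):ℂ) := by push_cast; linear_combination -h
    exact_mod_cast this
  have hc₁ : c₁ = 0 := by
    have h : c₁ * (4 - (b₁:ℂ)*(b₂:ℂ)) = 0 := by
      linear_combination 2*γ*e1 - (b₁:ℂ)*e2 - 4*c₁*hγ2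
    exact (mul_eq_zero.mp h).resolve_right h4
  have hc₂ : c₂ = 0 := by
    rw [hc₁, mul_zero, add_zero] at e2
    rcases mul_eq_zero.mp e2 with h | h
    · exact (mul_eq_zero.mp h).resolve_left hγne
    · exact absurd h two_ne_zero
  rcases hnz with ⟨ω, hω, hne⟩ | ⟨ω, hω, hne⟩
  · exact hne (by rw [hφ₁₀ ω hω, hc₁, zero_mul])
  · exact hne (by rw [hφ₂₀ ω hω, hc₂, zero_mul])
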